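/- Let q be an odd prime power (q = r^t with r an odd prime, t ≥ 1), let m be a positive integer, and let N be the natural number with (q - 1) * N = q^(m+1) - 1. Then there exists an N × N integer matrix W with entries in {-1, 0, 1} such that W * Wᵀ = q^m • (identity matrix of order N), and such that for every pair of distinct rows i ≠ j, the number of columns c with (W i c) * (W j c) = 1 equals q^(m-1) * (q - 1) / 2 and the number of columns c with (W i c) * (W j c) = -1 also equals q^(m-1) * (q - 1) / 2. (These are the balanced weighing matrices with classical parameters W((q^(m+1)-1)/(q-1), q^m).) -/

import Mathlib

open Matrix Finset

set_option linter.unusedSectionVars false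
set_option maxHeartbeats 1000000

section aux
variable {F : Type*} [Field F] [Fintype F] [DecidableEq F]

lemma aux_dot_nondeg {n : ℕ} {y : Fin n → F} (h : ∀ v, y ⬝ᵥ v = 0) : y = 0 := by
  funext k
  have := h (Pi.single k 1)
  rwa [dotProduct_single, mul_one] at this

lemma aux_exists_dual_pair {n : ℕ} {x y : Fin n → F} (hx : x ≠ 0)
    (hind : ∀ c : F, y ≠ c • x) :
    ∃ u w : Fin n → F, x ⬝ᵥ u = 1 ∧ y ⬝ᵥ u = 0 ∧ x ⬝ᵥ w = 0 ∧ y ⬝ᵥ w = 1 := by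
  obtain ⟨k, hk⟩ : ∃ k, x k ≠ 0 := by
    by_contra h
    push_neg at h
    exact hx (funext h)
  set u0 : Fin n → F := Pi.single k (x k)⁻¹ with hu0
  have hxu0 : x ⬝ᵥ u0 = 1 := by
    simp [hu0, dotProduct_single, mul_inv_cancel₀ hk]
  set c := y ⬝ᵥ u0 with hc
  have hw0 : ∃ w0, x ⬝ᵥ w0 = 0 ∧ y ⬝ᵥ w0 ≠ 0 := by
    by_contra h
    push_neg at h
    apply hind c
    have : ∀ v, (y - c • x) ⬝ᵥ v = 0 := by
      intro v
      have hker : x ⬝ᵥ (v - (x ⬝ᵥ v) • u0) = 0 := by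
        simp [dotProduct_sub, dotProduct_smul, smul_eq_mul, hxu0]
      have := h _ hker
      simp only [dotProduct_sub, dotProduct_smul, smul_eq_mul, sub_eq_zero] at this
      simp [sub_dotProduct, smul_dotProduct, smul_eq_mul, this, mul_comm, hc]
    have := aux_dot_nondeg this
    rw [sub_eq_zero] at this
    exact this
  obtain ⟨w0, hxw0, hyw0⟩ := hw0
  refine ⟨u0 - (c * (y ⬝ᵥ w0)⁻¹) • w0, (y ⬝ᵥ w0)⁻¹ • w0, ?_, ?_, ?_, ?_⟩ <;>
    simp [dotProduct_sub, dotProduct_smul, smul_eq_mul, hxu0, hxw0, ← hc,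
      inv_mul_cancel₀ hyw0, mul_inv_cancel₀ hyw0, mul_assoc]

end aux

section fiber
variable {α β M : Type*} [Fintype α] [Fintype β] [DecidableEq β] [AddCommMonoid M]

lemma aux_sum_fiberwise_const (f : α → β) (K : ℕ)
    (hf : ∀ b : β, (univ.filter fun a => f a = b).card = K) (g : β → M) :
    ∑ a, g (f a) = K • ∑ b, g b := by
  rw [← Finset.sum_fiberwise univ f (fun a => g (f a)), Finset.smul_sum]
  refine Finset.sum_congr rfl fun b _ => ?_
  rw [Finset.sum_congr rfl (fun a ha => ?_), Finset.sum_const, hf b]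
  · simp only [Finset.mem_filter] at ha
    rw [ha.2]

lemma aux_fibers_mul (f : α → β) (K : ℕ)
    (hf : ∀ b : β, (univ.filter fun a => f a = b).card = K) :
    K * Fintype.card β = Fintype.card α := by
  classical
  have h1 := Finset.card_eq_sum_card_fiberwise (f := f) (s := univ) (t := univ)
    (fun x _ => Finset.mem_univ _)
  have h2 : #(univ : Finset α) = ∑ _b : β, K := by
    rw [h1]; exact Finset.sum_congr rfl fun b _ => hf b
  rw [show Fintype.card α = #(univ : Finset α) from rfl, h2, Finset.sum_const, smul_eq_mul,
    mul_comm, show Fintype.card β = #(univ : Finset β) from rfl]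

end fiber

section twofibers
variable {F : Type*} [Field F] [Fintype F] [DecidableEq F]

lemma aux_fiber_card_two {n : ℕ} {x y : Fin n → F} (hx : x ≠ 0)
    (hind : ∀ c : F, y ≠ c • x) (ab : F × F) :
    (univ.filter fun v : Fin n → F => (x ⬝ᵥ v, y ⬝ᵥ v) = ab).card
      = (univ.filter fun v : Fin n → F => (x ⬝ᵥ v, y ⬝ᵥ v) = (0, 0)).card := by
  obtain ⟨u, w, h1, h2, h3, h4⟩ := aux_exists_dual_pair hx hind
  obtain ⟨a, b⟩ := ab
  refine Finset.card_bij' (fun v _ => v - a • u - b • w) (fun v _ => v + a • u + b • w)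
    ?_ ?_ ?_ ?_
  · intro v hv
    simp only [Finset.mem_filter, Finset.mem_univ, true_and, Prod.mk.injEq] at hv ⊢
    simp [dotProduct_sub, dotProduct_smul, smul_eq_mul, h1, h2, h3, h4, hv.1, hv.2]
  · intro v hv
    simp only [Finset.mem_filter, Finset.mem_univ, true_and, Prod.mk.injEq] at hv ⊢
    simp [dotProduct_add, dotProduct_smul, smul_eq_mul, h1, h2, h3, h4, hv.1, hv.2]
  · intro v _; module
  · intro v _; module

lemma aux_fiber_card_one {n : ℕ} {x : Fin n → F} (hx : x ≠ 0) (a : F) :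
    (univ.filter fun v : Fin n → F => x ⬝ᵥ v = a).card
      = (univ.filter fun v : Fin n → F => x ⬝ᵥ v = 0).card := by
  obtain ⟨k, hk⟩ : ∃ k, x k ≠ 0 := by
    by_contra h; push_neg at h; exact hx (funext h)
  have h1 : x ⬝ᵥ (Pi.single k (x k)⁻¹ : Fin n → F) = 1 := by
    simp [dotProduct_single, mul_inv_cancel₀ hk]
  set u : Fin n → F := Pi.single k (x k)⁻¹
  refine Finset.card_bij' (fun v _ => v - a • u) (fun v _ => v + a • u) ?_ ?_ ?_ ?_
  · intro v hv
    simp only [Finset.mem_filter, Finset.mem_univ, true_and] at hv ⊢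
    simp [dotProduct_sub, dotProduct_smul, smul_eq_mul, h1, hv]
  · intro v hv
    simp only [Finset.mem_filter, Finset.mem_univ, true_and] at hv ⊢
    simp [dotProduct_add, dotProduct_smul, smul_eq_mul, h1, hv]
  · intro v _; module
  · intro v _; module

end twofibers

section proj
variable {F : Type*} [Field F] [Fintype F] [DecidableEq F] {n : ℕ}

noncomputable instance : Fintype (Projectivization F (Fin n → F)) :=
  @Fintype.ofFinite _ (Quotient.finite _)

noncomputable def auxOrbitEquiv (F : Type*) [Field F] [Fintype F] [DecidableEq F] (n : ℕ) :
    Fˣ × Projectivization F (Fin n → F) ≃ {v : Fin n → F // v ≠ 0} := by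
  refine Equiv.ofBijective
    (fun cp => ⟨(cp.1 : F) • cp.2.rep, smul_ne_zero cp.1.ne_zero cp.2.rep_nonzero⟩) ⟨?_, ?_⟩
  · rintro ⟨c, p⟩ ⟨d, q⟩ h
    simp only [Subtype.mk.injEq] at h
    have hmk : ∀ (e : Fˣ) (s : Projectivization F (Fin n → F)),
        Projectivization.mk F ((e : F) • s.rep) (smul_ne_zero e.ne_zero s.rep_nonzero) = s := by
      intro e s
      rw [show s = Projectivization.mk F s.rep s.rep_nonzero from (Projectivization.mk_rep s).symm]
      rw [Projectivization.mk_eq_mk_iff']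
      exact ⟨(e : F), by simp⟩
    have hpq : p = q := by
      rw [← hmk c p, ← hmk d q, Projectivization.mk_eq_mk_iff']
      exact ⟨1, by rw [one_smul, h]⟩
    subst hpq
    have hs : ((c : F) - (d : F)) • p.rep = 0 := by
      rw [sub_smul, h, sub_self]
    rcases smul_eq_zero.mp hs with h' | h'
    · have hcd : c = d := Units.ext (sub_eq_zero.mp h')
      rw [hcd]
    · exact absurd h' p.rep_nonzero
  · rintro ⟨v, hv⟩
    have h1 : Projectivization.mk F v hv
        = Projectivization.mk F (Projectivization.mk F v hv).rep
            (Projectivization.rep_nonzero _) := (Projectivization.mk_rep _).symm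
    rw [Projectivization.mk_eq_mk_iff'] at h1
    obtain ⟨a, ha⟩ := h1
    have ha0 : a ≠ 0 := by
      rintro rfl
      rw [zero_smul] at ha
      exact hv ha.symm
    exact ⟨⟨Units.mk0 a ha0, Projectivization.mk F v hv⟩, Subtype.ext ha⟩

lemma aux_sum_orbits {M : Type*} [AddCommMonoid M] (g : (Fin n → F) → M)
    (hg : ∀ (c : F), c ≠ 0 → ∀ v, g (c • v) = g v) :
    ∑ v : Fin n → F, g v
      = g 0 + (Fintype.card F - 1) • ∑ p : Projectivization F (Fin n → F), g p.rep := by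
  classical
  rw [← Finset.sum_filter_add_sum_filter_not univ (fun v => v = 0) g]
  congr 1
  · rw [Finset.filter_eq' univ 0, if_pos (Finset.mem_univ _), Finset.sum_singleton]
  · have h1 : ∑ v ∈ univ.filter (fun v : Fin n → F => ¬ v = 0), g v
        = ∑ x : {v : Fin n → F // v ≠ 0}, g x.val := by
      exact Finset.sum_subtype _ (fun x => by simp) _
    rw [h1, ← Equiv.sum_comp (auxOrbitEquiv F n) (fun x => g x.val)]
    have h2 : ∀ cp : Fˣ × Projectivization F (Fin n → F),
        g ((auxOrbitEquiv F n cp).val) = g cp.2.rep := by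
      rintro ⟨c, p⟩
      simp only [auxOrbitEquiv, Equiv.ofBijective_apply]
      exact hg _ c.ne_zero _
    rw [Finset.sum_congr rfl (fun cp _ => h2 cp)]
    have h3 : ∑ cp : Fˣ × Projectivization F (Fin n → F), g cp.2.rep
        = ∑ _x : Fˣ, ∑ y : Projectivization F (Fin n → F), g y.rep :=
      Fintype.sum_prod_type _
    rw [h3, Finset.sum_const, Finset.card_univ, Fintype.card_units]
end proj

section char
variable {F : Type*} [Field F] [Fintype F] [DecidableEq F]

lemma aux_char_zero : quadraticChar F 0 = 0 := by
  rw [quadraticChar_eq_zero_iff]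

lemma aux_char_count (hF : ringChar F ≠ 2) {ε : ℤ} (hε : ε = 1 ∨ ε = -1) :
    2 * (univ.filter fun c : F => quadraticChar F c = ε).card = Fintype.card F - 1 := by
  have hdisj : Disjoint (univ.filter fun c : F => quadraticChar F c = 1)
      (univ.filter fun c : F => quadraticChar F c = -1) := by
    rw [Finset.disjoint_filter]
    intro c _ h1 h2
    rw [h1] at h2; norm_num at h2
  have hunion : (univ.filter fun c : F => quadraticChar F c = 1)
      ∪ (univ.filter fun c : F => quadraticChar F c = -1)
      = univ.filter fun c : F => c ≠ 0 := by
    rw [← Finset.filter_or]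
    apply Finset.filter_congr
    intro c _
    constructor
    · rintro (h | h) rfl <;> rw [aux_char_zero] at h <;> norm_num at h
    · exact fun h => quadraticChar_dichotomy h
  have hcards : (univ.filter fun c : F => quadraticChar F c = 1).card
      + (univ.filter fun c : F => quadraticChar F c = -1).card = Fintype.card F - 1 := by
    rw [← Finset.card_union_of_disjoint hdisj, hunion, Finset.filter_ne',
      Finset.card_erase_of_mem (Finset.mem_univ _), Finset.card_univ]
  have hsum : ((univ.filter fun c : F => quadraticChar F c = 1).card : ℤ)
      - ((univ.filter fun c : F => quadraticChar F c = -1).card : ℤ) = 0 := by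
    have h0 := quadraticChar_sum_zero hF
    rw [← Finset.sum_filter_add_sum_filter_not univ
      (fun c : F => quadraticChar F c = 1) (fun c => quadraticChar F c)] at h0
    rw [← Finset.sum_filter_add_sum_filter_not
        (univ.filter fun c : F => ¬ quadraticChar F c = 1)
        (fun c : F => quadraticChar F c = -1) (fun c => quadraticChar F c)] at h0
    have e1 : ∑ c ∈ (univ.filter fun c : F => quadraticChar F c = 1), quadraticChar F c
        = ((univ.filter fun c : F => quadraticChar F c = 1).card : ℤ) := by
      rw [Finset.sum_congr rfl (fun c hc => (Finset.mem_filter.mp hc).2),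
        Finset.sum_const, nsmul_eq_mul, mul_one]
    have e2' : (univ.filter fun c : F => ¬ quadraticChar F c = 1).filter
        (fun c : F => quadraticChar F c = -1)
        = univ.filter fun c : F => quadraticChar F c = -1 := by
      rw [Finset.filter_filter]
      apply Finset.filter_congr
      intro c _
      constructor
      · exact fun h => h.2
      · intro h; exact ⟨by rw [h]; norm_num, h⟩
    have e2 : ∑ c ∈ (univ.filter fun c : F => ¬ quadraticChar F c = 1).filter
        (fun c : F => quadraticChar F c = -1), quadraticChar F c
        = -(((univ.filter fun c : F => quadraticChar F c = -1).card : ℤ)) := by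
      rw [e2', Finset.sum_congr rfl (fun c hc => (Finset.mem_filter.mp hc).2),
        Finset.sum_const, nsmul_eq_mul, mul_neg_one]
    have e3 : ∑ c ∈ (univ.filter fun c : F => ¬ quadraticChar F c = 1).filter
        (fun c : F => ¬ quadraticChar F c = -1), quadraticChar F c = 0 := by
      apply Finset.sum_eq_zero
      intro c hc
      simp only [Finset.mem_filter] at hc
      by_contra h
      have hc0 : c ≠ 0 := fun h0 => h (by rw [h0, aux_char_zero])
      rcases quadraticChar_dichotomy hc0 with h' | h'
      · exact hc.1.2 h'
      · exact hc.2 h'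
    rw [e1, e2, e3] at h0
    omega
  rcases hε with rfl | rfl <;> omega

lemma aux_char_shift {a : F} (ha : a ≠ 0) (ε : ℤ) :
    (univ.filter fun b : F => quadraticChar F (a * b) = ε).card
      = (univ.filter fun c : F => quadraticChar F c = ε).card := by
  refine Finset.card_bij' (fun b _ => a * b) (fun c _ => a⁻¹ * c) ?_ ?_ ?_ ?_
  · intro b hb; simp only [Finset.mem_filter, Finset.mem_univ, true_and] at hb ⊢; exact hb
  · intro c hc
    simp only [Finset.mem_filter, Finset.mem_univ, true_and] at hc ⊢
    rwa [← mul_assoc, mul_inv_cancel₀ ha, one_mul]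
  · intro b _; rw [← mul_assoc, inv_mul_cancel₀ ha, one_mul]
  · intro c _; rw [← mul_assoc, mul_inv_cancel₀ ha, one_mul]

lemma aux_sum_ite_ne_zero {M : Type*} [AddCommMonoid M] (C : M) :
    ∑ a : F, (if a = 0 then 0 else C) = (Fintype.card F - 1) • C := by
  rw [Finset.sum_ite, Finset.sum_const_zero, Finset.sum_const, zero_add]
  congr 1
  have : (univ.filter fun a : F => ¬ a = 0) = univ.erase 0 := Finset.filter_ne' univ 0
  rw [this, Finset.card_erase_of_mem (Finset.mem_univ _), Finset.card_univ]

lemma aux_char_pair_count (hF : ringChar F ≠ 2) {ε : ℤ} (hε : ε = 1 ∨ ε = -1) :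
    2 * (univ.filter fun ab : F × F => quadraticChar F (ab.1 * ab.2) = ε).card
      = (Fintype.card F - 1) * (Fintype.card F - 1) := by
  have key : (univ.filter fun ab : F × F => quadraticChar F (ab.1 * ab.2) = ε).card
      = ∑ a : F, (univ.filter fun b : F => quadraticChar F (a * b) = ε).card := by
    rw [Finset.card_filter, Fintype.sum_prod_type]
    exact Finset.sum_congr rfl fun a _ => (Finset.card_filter _ _).symm
  rw [key]
  have hε0 : ε ≠ 0 := by rcases hε with rfl | rfl <;> norm_num
  have step : ∀ a : F, (univ.filter fun b : F => quadraticChar F (a * b) = ε).card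
      = if a = 0 then 0 else (univ.filter fun c : F => quadraticChar F c = ε).card := by
    intro a
    by_cases ha : a = 0
    · simp only [ha, if_pos, zero_mul, aux_char_zero]
      rw [Finset.card_eq_zero, Finset.filter_eq_empty_iff]
      intro b _; exact fun h => hε0 h.symm
    · rw [if_neg ha, aux_char_shift ha]
  rw [Finset.sum_congr rfl (fun a _ => step a), aux_sum_ite_ne_zero, smul_eq_mul]
  have := aux_char_count hF hε
  calc 2 * ((Fintype.card F - 1) * (univ.filter fun c : F => quadraticChar F c = ε).card)
      = (Fintype.card F - 1) * (2 * (univ.filter fun c : F => quadraticChar F c = ε).card) := by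
        ring
    _ = _ := by rw [this]

lemma aux_char_pair_sum (hF : ringChar F ≠ 2) :
    ∑ ab : F × F, quadraticChar F (ab.1 * ab.2) = 0 := by
  rw [Fintype.sum_prod_type]
  apply Finset.sum_eq_zero
  intro a _
  by_cases ha : a = 0
  · simp [ha, aux_char_zero]
  · dsimp only
    calc ∑ y : F, quadraticChar F (a * y) = ∑ c : F, quadraticChar F c :=
          Fintype.sum_bijective _ (mulLeft_bijective₀ a ha) _ _ (fun y => rfl)
      _ = 0 := quadraticChar_sum_zero hF

lemma aux_char_sq_sum : ∑ a : F, (quadraticChar F a)^2 = (Fintype.card F : ℤ) - 1 := by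
  have h : ∀ a : F, (quadraticChar F a)^2 = if a = 0 then 0 else 1 := by
    intro a
    by_cases ha : a = 0
    · simp [ha, aux_char_zero]
    · rw [if_neg ha, quadraticChar_sq_one ha]
  rw [Finset.sum_congr rfl (fun a _ => h a), aux_sum_ite_ne_zero, nsmul_eq_mul, mul_one]
  have : 1 ≤ Fintype.card F := Fintype.card_pos
  push_cast [Nat.cast_sub this]
  ring

end char

/-- For an odd prime power `q = r^t` and a positive integer `m`, there is a balanced
weighing matrix with classical parameters `W((q^(m+1)-1)/(q-1), q^m)`: an `N × N`
`(0, ±1)`-matrix `W` with `W * Wᵀ = q^m • 1` such that for distinct rows the number of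
columns with product `+1` equals the number with product `-1`, both being
`q^(m-1) * (q-1) / 2`. -/
theorem stmt_3 (r t q m N : ℕ) (hr : r.Prime) (hodd : Odd r) (ht : 1 ≤ t) (hq : q = r ^ t)
    (hm : 1 ≤ m) (hN : (q - 1) * N = q ^ (m + 1) - 1) :
    ∃ W : Matrix (Fin N) (Fin N) ℤ,
      (∀ i j, W i j = -1 ∨ W i j = 0 ∨ W i j = 1) ∧
      W * Wᵀ = ((q ^ m : ℕ) : ℤ) • 1 ∧
      ∀ i j : Fin N, i ≠ j →
        {c : Fin N | W i c * W j c = 1}.ncard = q ^ (m - 1) * (q - 1) / 2 ∧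
        {c : Fin N | W i c * W j c = -1}.ncard = q ^ (m - 1) * (q - 1) / 2 := by
  classical
  haveI : Fact r.Prime := ⟨hr⟩
  set F := GaloisField r t with hFdef
  haveI : Fintype F := Fintype.ofFinite _
  haveI : DecidableEq F := Classical.decEq _
  have hcard : Fintype.card F = q := by
    rw [hq, ← Nat.card_eq_fintype_card, GaloisField.card r t (by omega)]
  have hchar : ringChar F ≠ 2 := by
    rw [ringChar.eq F r]
    rcases hodd with ⟨j, hj⟩; omega
  have hr3 : 3 ≤ r := by
    have := hr.two_le
    rcases hodd with ⟨j, hj⟩; omega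
  have hq3 : 3 ≤ q := by
    calc 3 ≤ r := hr3
    _ = r ^ 1 := (pow_one r).symm
    _ ≤ r ^ t := Nat.pow_le_pow_right (by omega) ht
    _ = q := hq.symm
  have hqodd : Odd q := hq ▸ hodd.pow
  obtain ⟨k, hk⟩ : ∃ k, q - 1 = 2 * k := by
    rcases hqodd with ⟨j, hj⟩; exact ⟨j, by omega⟩
  have hcardV : Fintype.card (Fin (m+1) → F) = q ^ (m+1) := by
    rw [Fintype.card_fun, hcard, Fintype.card_fin]
  have hqpow : 1 ≤ q ^ (m+1) := Nat.one_le_pow _ _ (by omega)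
  -- cardinality of the projectivization
  have hProjCard : Fintype.card (Projectivization F (Fin (m+1) → F)) = N := by
    have h1 := aux_sum_orbits (F := F) (n := m+1) (fun _ => (1 : ℕ)) (fun c hc v => rfl)
    simp only [Finset.sum_const, Finset.card_univ, smul_eq_mul, mul_one, hcard, hcardV] at h1
    have h2 : (q-1) * Fintype.card (Projectivization F (Fin (m+1) → F)) = (q-1) * N := by
      rw [hN]; omega
    exact Nat.eq_of_mul_eq_mul_left (by omega) h2
  set P := Projectivization F (Fin (m+1) → F) with hPdef
  have e : Fin N ≃ P := Fintype.equivOfCardEq (by rw [Fintype.card_fin, hProjCard])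
  set χ := quadraticChar F with hχdef
  -- fiber counts
  have hfib2 : ∀ (x y : Fin (m+1) → F), x ≠ 0 → (∀ c : F, y ≠ c • x) →
      ∀ ab : F × F,
        (univ.filter fun v : Fin (m+1) → F => (x ⬝ᵥ v, y ⬝ᵥ v) = ab).card = q ^ (m-1) := by
    intro x y hx hind ab
    have hconst := aux_fiber_card_two hx hind
    have hmul := aux_fibers_mul (fun v : Fin (m+1) → F => (x ⬝ᵥ v, y ⬝ᵥ v)) _
      (fun ab' => hconst ab')
    rw [Fintype.card_prod, hcard, hcardV] at hmul
    have hpow : q ^ (m-1) * (q * q) = q ^ (m+1) := by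
      rw [← pow_two, ← pow_add]
      congr 1
      omega
    rw [hconst ab]
    exact Nat.eq_of_mul_eq_mul_right (show 0 < q * q by positivity) (by rw [hmul, ← hpow])
  have hfib1 : ∀ (x : Fin (m+1) → F), x ≠ 0 →
      ∀ a : F, (univ.filter fun v : Fin (m+1) → F => x ⬝ᵥ v = a).card = q ^ m := by
    intro x hx a
    have hconst := aux_fiber_card_one hx
    have hmul := aux_fibers_mul (fun v : Fin (m+1) → F => x ⬝ᵥ v) _ (fun a' => hconst a')
    rw [hcard, hcardV] at hmul
    have hpow : q ^ m * q = q ^ (m+1) := by rw [← pow_succ]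
    rw [hconst a]
    exact Nat.eq_of_mul_eq_mul_right (show 0 < q by omega) (by rw [hmul, ← hpow])
  -- independence of representatives of distinct points
  have hindep : ∀ i j : Fin N, i ≠ j → ∀ c : F, (e j).rep ≠ c • (e i).rep := by
    intro i j hij c hc
    have hc0 : c ≠ 0 := by
      rintro rfl
      rw [zero_smul] at hc
      exact (e j).rep_nonzero hc
    apply hij
    apply e.injective
    have hmk : Projectivization.mk F ((e j).rep) ((e j).rep_nonzero)
        = Projectivization.mk F ((e i).rep) ((e i).rep_nonzero) := by
      rw [Projectivization.mk_eq_mk_iff']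
      exact ⟨c, hc.symm⟩
    rw [Projectivization.mk_rep, Projectivization.mk_rep] at hmk
    exact hmk.symm ▸ rfl
  -- invariance of the summands under scaling
  have hinv : ∀ (x y : Fin (m+1) → F), ∀ (c : F), c ≠ 0 → ∀ v,
      χ (x ⬝ᵥ (c • v)) * χ (y ⬝ᵥ (c • v)) = χ (x ⬝ᵥ v) * χ (y ⬝ᵥ v) := by
    intro x y c hc v
    rw [dotProduct_smul, dotProduct_smul, smul_eq_mul, smul_eq_mul, _root_.map_mul, _root_.map_mul]
    have hsq := quadraticChar_sq_one hc
    calc χ c * χ (x ⬝ᵥ v) * (χ c * χ (y ⬝ᵥ v))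
        = (χ c)^2 * (χ (x ⬝ᵥ v) * χ (y ⬝ᵥ v)) := by ring
      _ = χ (x ⬝ᵥ v) * χ (y ⬝ᵥ v) := by rw [hsq, one_mul]
  have hzero0 : ∀ y : Fin (m+1) → F, χ (y ⬝ᵥ (0 : Fin (m+1) → F)) = 0 := by
    intro y
    rw [dotProduct_zero]
    exact aux_char_zero
  -- the off-diagonal sum
  have hoff : ∀ i j : Fin N, i ≠ j →
      ∑ c : Fin N, χ ((e i).rep ⬝ᵥ (e c).rep) * χ ((e j).rep ⬝ᵥ (e c).rep) = 0 := by
    intro i j hij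
    set x := (e i).rep with hxd
    set y := (e j).rep with hyd
    have hx : x ≠ 0 := (e i).rep_nonzero
    have hind : ∀ c : F, y ≠ c • x := hindep i j hij
    have h1 : ∑ c : Fin N, χ (x ⬝ᵥ (e c).rep) * χ (y ⬝ᵥ (e c).rep)
        = ∑ p : P, χ (x ⬝ᵥ p.rep) * χ (y ⬝ᵥ p.rep) :=
      Equiv.sum_comp e (fun p => χ (x ⬝ᵥ p.rep) * χ (y ⬝ᵥ p.rep))
    have horb := aux_sum_orbits (fun v => χ (x ⬝ᵥ v) * χ (y ⬝ᵥ v)) (hinv x y)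
    have hsumv : ∑ v : Fin (m+1) → F, χ (x ⬝ᵥ v) * χ (y ⬝ᵥ v) = 0 := by
      calc ∑ v : Fin (m+1) → F, χ (x ⬝ᵥ v) * χ (y ⬝ᵥ v)
          = ∑ v : Fin (m+1) → F,
              (fun ab : F × F => χ (ab.1 * ab.2)) (x ⬝ᵥ v, y ⬝ᵥ v) := by
            apply Finset.sum_congr rfl
            intro v _
            dsimp only
            rw [_root_.map_mul]
        _ = (q^(m-1)) • ∑ ab : F × F, χ (ab.1 * ab.2) :=
            aux_sum_fiberwise_const _ _ (hfib2 x y hx hind) (fun ab : F × F => χ (ab.1 * ab.2))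
        _ = 0 := by rw [aux_char_pair_sum hchar, smul_zero]
    simp only [hsumv, hzero0, mul_zero, zero_add, hcard] at horb
    have hq1 : ((q - 1 : ℕ) : ℤ) ≠ 0 := by
      have : q - 1 ≠ 0 := by omega
      exact_mod_cast this
    rw [← h1] at horb
    have := horb.symm
    rw [nsmul_eq_mul] at this
    rcases mul_eq_zero.mp this with h | h
    · exact absurd h hq1
    · exact h
  -- the diagonal sum
  have hdiag : ∀ i : Fin N,
      ∑ c : Fin N, χ ((e i).rep ⬝ᵥ (e c).rep) * χ ((e i).rep ⬝ᵥ (e c).rep)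
        = ((q^m : ℕ) : ℤ) := by
    intro i
    set x := (e i).rep with hxd
    have hx : x ≠ 0 := (e i).rep_nonzero
    have h1 : ∑ c : Fin N, χ (x ⬝ᵥ (e c).rep) * χ (x ⬝ᵥ (e c).rep)
        = ∑ p : P, χ (x ⬝ᵥ p.rep) * χ (x ⬝ᵥ p.rep) :=
      Equiv.sum_comp e (fun p => χ (x ⬝ᵥ p.rep) * χ (x ⬝ᵥ p.rep))
    have horb := aux_sum_orbits (fun v => χ (x ⬝ᵥ v) * χ (x ⬝ᵥ v)) (hinv x x)
    have hsumv : ∑ v : Fin (m+1) → F, χ (x ⬝ᵥ v) * χ (x ⬝ᵥ v)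
        = ((q^m : ℕ) : ℤ) * ((q : ℤ) - 1) := by
      calc ∑ v : Fin (m+1) → F, χ (x ⬝ᵥ v) * χ (x ⬝ᵥ v)
          = ∑ v : Fin (m+1) → F, (fun a : F => (χ a)^2) (x ⬝ᵥ v) := by
            apply Finset.sum_congr rfl
            intro v _
            dsimp only
            rw [pow_two]
        _ = (q^m) • ∑ a : F, (χ a)^2 :=
            aux_sum_fiberwise_const _ _ (hfib1 x hx) (fun a : F => (χ a)^2)
        _ = ((q^m : ℕ) : ℤ) * ((q : ℤ) - 1) := by
            rw [aux_char_sq_sum, hcard, nsmul_eq_mul]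
    simp only [hsumv, hzero0, mul_zero, zero_add, hcard] at horb
    rw [← h1] at horb
    have hcast : ((q - 1 : ℕ) : ℤ) = (q : ℤ) - 1 := by
      have : 1 ≤ q := by omega
      push_cast [Nat.cast_sub this]
      ring
    rw [nsmul_eq_mul, hcast] at horb
    have hne : ((q : ℤ) - 1) ≠ 0 := by
      have : (3 : ℤ) ≤ (q : ℤ) := by exact_mod_cast hq3
      omega
    have : ((q : ℤ) - 1) * (∑ c : Fin N, χ (x ⬝ᵥ (e c).rep) * χ (x ⬝ᵥ (e c).rep))
        = ((q : ℤ) - 1) * ((q^m : ℕ) : ℤ) := by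
      rw [← horb]; ring
    exact mul_left_cancel₀ hne this
  -- balanced counts
  have hcount : ∀ i j : Fin N, i ≠ j → ∀ ε : ℤ, (ε = 1 ∨ ε = -1) →
      (univ.filter fun c : Fin N =>
        χ ((e i).rep ⬝ᵥ (e c).rep) * χ ((e j).rep ⬝ᵥ (e c).rep) = ε).card
        = q^(m-1) * k := by
    intro i j hij ε hε
    set x := (e i).rep with hxd
    set y := (e j).rep with hyd
    have hx : x ≠ 0 := (e i).rep_nonzero
    have hind : ∀ c : F, y ≠ c • x := hindep i j hij
    have hε0 : ε ≠ 0 := by rcases hε with rfl | rfl <;> norm_num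
    set g : (Fin (m+1) → F) → ℕ := fun v => if χ (x ⬝ᵥ v) * χ (y ⬝ᵥ v) = ε then 1 else 0
      with hgdef
    have hg : ∀ (c : F), c ≠ 0 → ∀ v, g (c • v) = g v := by
      intro c hc v
      rw [hgdef]
      dsimp only
      rw [hinv x y c hc v]
    have horb := aux_sum_orbits g hg
    have hg0 : g 0 = 0 := by
      rw [hgdef]
      dsimp only
      rw [hzero0 x, zero_mul, if_neg (fun h => hε0 h.symm)]
    have hcfilter : (univ.filter fun c : Fin N =>
        χ (x ⬝ᵥ (e c).rep) * χ (y ⬝ᵥ (e c).rep) = ε).card = ∑ p : P, g p.rep := by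
      rw [Finset.card_filter]
      exact Equiv.sum_comp e (fun p => g p.rep)
    have hTsum : ∑ v : Fin (m+1) → F, g v
        = q^(m-1) * (univ.filter fun ab : F × F => χ (ab.1 * ab.2) = ε).card := by
      calc ∑ v : Fin (m+1) → F, g v
          = ∑ v : Fin (m+1) → F,
              (fun ab : F × F => if χ (ab.1 * ab.2) = ε then 1 else 0) (x ⬝ᵥ v, y ⬝ᵥ v) := by
            apply Finset.sum_congr rfl
            intro v _
            rw [hgdef]
            dsimp only
            rw [_root_.map_mul]
        _ = (q^(m-1)) • ∑ ab : F × F, (if χ (ab.1 * ab.2) = ε then 1 else 0) :=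
            aux_sum_fiberwise_const _ _ (hfib2 x y hx hind)
              (fun ab : F × F => if χ (ab.1 * ab.2) = ε then (1:ℕ) else 0)
        _ = q^(m-1) * (univ.filter fun ab : F × F => χ (ab.1 * ab.2) = ε).card := by
            rw [smul_eq_mul, ← Finset.card_filter]
    have hT : (univ.filter fun ab : F × F => χ (ab.1 * ab.2) = ε).card = 2 * (k * k) := by
      have h2T := aux_char_pair_count hchar hε
      rw [hcard, hk] at h2T
      have hkk : (2*k)*(2*k) = 2*(2*(k*k)) := by ring
      rw [hkk] at h2T
      rw [hχdef]
      omega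
    rw [hg0, zero_add, hcard] at horb
    rw [hcfilter.symm, hTsum, hT, smul_eq_mul] at horb
    -- horb : q^(m-1) * (2*(k*k)) = (q-1) * A
    have hfinal : (q - 1) * ((univ.filter fun c : Fin N =>
        χ (x ⬝ᵥ (e c).rep) * χ (y ⬝ᵥ (e c).rep) = ε).card)
        = (q - 1) * (q^(m-1) * k) := by
      rw [← horb, hk]; ring
    exact Nat.eq_of_mul_eq_mul_left (by omega) hfinal
  -- assemble
  refine ⟨Matrix.of (fun i j => χ ((e i).rep ⬝ᵥ (e j).rep)), ?_, ?_, ?_⟩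
  · intro i j
    simp only [Matrix.of_apply]
    by_cases h : (e i).rep ⬝ᵥ (e j).rep = 0
    · right; left
      rw [h]
      exact aux_char_zero
    · rcases quadraticChar_dichotomy h with h' | h'
      · right; right; exact h'
      · left; exact h'
  · ext i j
    rw [Matrix.mul_apply]
    simp only [Matrix.transpose_apply, Matrix.of_apply]
    by_cases hij : i = j
    · subst hij
      rw [hdiag i, Matrix.smul_apply, Matrix.one_apply_eq, smul_eq_mul, mul_one]
    · rw [hoff i j hij, Matrix.smul_apply, Matrix.one_apply_ne hij, smul_eq_mul, mul_zero]
  · intro i j hij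
    have htarget : q ^ (m - 1) * (q - 1) / 2 = q^(m-1) * k := by
      rw [hk]
      rw [show q^(m-1) * (2 * k) = (q^(m-1) * k) * 2 by ring]
      exact Nat.mul_div_cancel _ (by norm_num)
    constructor
    · rw [Set.ncard_eq_toFinset_card', Set.toFinset_setOf, htarget]
      exact hcount i j hij 1 (Or.inl rfl)
    · rw [Set.ncard_eq_toFinset_card', Set.toFinset_setOf, htarget]
      exact hcount i j hij (-1) (Or.inr rfl)
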